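/- Let N ≥ 1, let α ∈ (0,1), let R be a real N×N matrix and d ∈ ℝ^N, and suppose the affine operator T(x) = Rx + d is α-averaged with Fix T ≠ ∅. Define ν = max{|λ| : λ ∈ ℂ is an eigenvalue of R with λ ≠ 1}, with the convention ν = 0 if 1 is the only eigenvalue of R. Then ν < 1, and for every x₀ ∈ ℝ^N the sequence x_{k+1} = T(x_k) converges to some x̄ ∈ Fix T with linear rate ν, in the sense that limsup_{k→∞} ‖x_k − x̄‖^{1/k} ≤ ν. -/

import Mathlib

open Filter Topology

/-- `T` is an `α`-averaged operator on `ℝ^N` (Euclidean norm). -/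
def IsAveragedOp {N : ℕ} (α : ℝ)
    (T : EuclideanSpace ℝ (Fin N) → EuclideanSpace ℝ (Fin N)) : Prop :=
  ∀ x y : EuclideanSpace ℝ (Fin N),
    ‖T x - T y‖ ^ 2 + ((1 - α) / α) * ‖(x - T x) - (y - T y)‖ ^ 2 ≤ ‖x - y‖ ^ 2

section Aux

variable {N : ℕ}

theorem aux_spec (B : Matrix (Fin N) (Fin N) ℂ) (lam : ℂ) :
    lam ∈ spectrum ℂ B ↔ ∃ v ≠ 0, B.mulVec v = lam • v := by
  rw [spectrum.mem_iff, Matrix.isUnit_iff_isUnit_det, isUnit_iff_ne_zero, not_ne_iff,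
    ← Matrix.exists_mulVec_eq_zero_iff]
  have h : ∀ v, (algebraMap ℂ (Matrix (Fin N) (Fin N) ℂ) lam - B).mulVec v
      = lam • v - B.mulVec v := by
    intro v
    rw [Matrix.sub_mulVec, Algebra.algebraMap_eq_smul_one, Matrix.smul_mulVec,
      Matrix.one_mulVec]
  constructor
  · rintro ⟨v, hv, hv2⟩
    exact ⟨v, hv, by have := hv2; rw [h, sub_eq_zero] at this; exact this.symm⟩
  · rintro ⟨v, hv, hv2⟩
    exact ⟨v, hv, by rw [h, hv2, sub_self]⟩

theorem aux_re' (B : Matrix (Fin N) (Fin N) ℝ) (v : Fin N → ℂ) (i : Fin N) :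
    (((B.map (algebraMap ℝ ℂ)).mulVec v) i).re = (B.mulVec fun j => (v j).re) i := by
  simp [Matrix.mulVec, dotProduct, Complex.re_sum, Matrix.map_apply]

theorem aux_im' (B : Matrix (Fin N) (Fin N) ℝ) (v : Fin N → ℂ) (i : Fin N) :
    (((B.map (algebraMap ℝ ℂ)).mulVec v) i).im = (B.mulVec fun j => (v j).im) i := by
  simp [Matrix.mulVec, dotProduct, Complex.im_sum, Matrix.map_apply]

theorem aux_nsq (x : EuclideanSpace ℝ (Fin N)) : ‖x‖ ^ 2 = ∑ i, x i ^ 2 := by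
  rw [EuclideanSpace.norm_eq, Real.sq_sqrt (by positivity)]
  simp [Real.norm_eq_abs, sq_abs]

theorem aux_mvmap (B : Matrix (Fin N) (Fin N) ℝ) (v : Fin N → ℝ) :
    (B.map (algebraMap ℝ ℂ)).mulVec (fun i => (v i : ℂ)) = fun i => ((B.mulVec v) i : ℂ) := by
  funext i
  rw [show (fun i => (v i : ℂ)) = (algebraMap ℝ ℂ) ∘ v from rfl, ← RingHom.map_mulVec]
  rfl

/-- real application bounded by complexified operator norm -/
theorem aux_cmp (B : Matrix (Fin N) (Fin N) ℝ) (u : EuclideanSpace ℝ (Fin N)) :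
    ‖Matrix.toEuclideanCLM (𝕜 := ℝ) B u‖
      ≤ ‖Matrix.toEuclideanCLM (𝕜 := ℂ) (B.map (algebraMap ℝ ℂ))‖ * ‖u‖ := by
  set uC : EuclideanSpace ℂ (Fin N) :=
    (WithLp.equiv 2 (Fin N → ℂ)).symm (fun i => ((u i : ℝ) : ℂ)) with huC
  have h1 : ‖uC‖ = ‖u‖ := by
    rw [EuclideanSpace.norm_eq, EuclideanSpace.norm_eq]
    congr 1
    apply Finset.sum_congr rfl
    intro i _
    simp [huC, Complex.norm_real, Real.norm_eq_abs]
  have h2 : ‖Matrix.toEuclideanCLM (𝕜 := ℝ) B u‖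
      = ‖Matrix.toEuclideanCLM (𝕜 := ℂ) (B.map (algebraMap ℝ ℂ)) uC‖ := by
    rw [EuclideanSpace.norm_eq, EuclideanSpace.norm_eq]
    congr 1
    apply Finset.sum_congr rfl
    intro i _
    have : Matrix.toEuclideanCLM (𝕜 := ℂ) (B.map (algebraMap ℝ ℂ)) uC
        = (WithLp.equiv 2 (Fin N → ℂ)).symm (fun i => ((B.mulVec (fun j => u j) i : ℝ) : ℂ)) := by
      rw [huC, WithLp.equiv_symm_apply, Matrix.toEuclideanCLM_toLp]
      congr 1
      rw [aux_mvmap]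
    rw [this]
    simp [Complex.norm_real, Real.norm_eq_abs]
  rw [h2, ← h1]
  exact (Matrix.toEuclideanCLM (𝕜 := ℂ) (B.map (algebraMap ℝ ℂ))).le_opNorm uC

theorem aux_keyC (R : Matrix (Fin N) (Fin N) ℝ) (c : ℝ)
    (hkey : ∀ u : Fin N → ℝ, (∑ i, (R.mulVec u) i ^ 2) + c * ∑ i, (u i - (R.mulVec u) i) ^ 2
      ≤ ∑ i, u i ^ 2)
    (v : Fin N → ℂ) :
    (∑ i, ‖((R.map (algebraMap ℝ ℂ)).mulVec v) i‖ ^ 2)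
      + c * ∑ i, ‖v i - ((R.map (algebraMap ℝ ℂ)).mulVec v) i‖ ^ 2
      ≤ ∑ i, ‖v i‖ ^ 2 := by
  have habs : ∀ z : ℂ, ‖z‖ ^ 2 = z.re ^ 2 + z.im ^ 2 := by
    intro z; rw [Complex.sq_norm, Complex.normSq_apply]; ring
  have e1 : ∀ i, ‖((R.map (algebraMap ℝ ℂ)).mulVec v) i‖ ^ 2
      = ((R.mulVec fun j => (v j).re) i) ^ 2 + ((R.mulVec fun j => (v j).im) i) ^ 2 := by
    intro i; rw [habs, aux_re', aux_im']
  have e2 : ∀ i, ‖v i - ((R.map (algebraMap ℝ ℂ)).mulVec v) i‖ ^ 2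
      = ((v i).re - (R.mulVec fun j => (v j).re) i) ^ 2
        + ((v i).im - (R.mulVec fun j => (v j).im) i) ^ 2 := by
    intro i; rw [habs, Complex.sub_re, Complex.sub_im, aux_re', aux_im']
  have e3 : ∀ i, ‖v i‖ ^ 2 = (v i).re ^ 2 + (v i).im ^ 2 := fun i => habs _
  simp only [e1, e2, e3, Finset.sum_add_distrib, mul_add]
  have h1 := hkey (fun j => (v j).re)
  have h2 := hkey (fun j => (v j).im)
  linarith

theorem aux_eiglt (R : Matrix (Fin N) (Fin N) ℝ) (c : ℝ) (hc : 0 < c)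
    (hkey : ∀ u : Fin N → ℝ, (∑ i, (R.mulVec u) i ^ 2) + c * ∑ i, (u i - (R.mulVec u) i) ^ 2
      ≤ ∑ i, u i ^ 2)
    (lam : ℂ) (hmem : lam ∈ spectrum ℂ (R.map (algebraMap ℝ ℂ))) (hne : lam ≠ 1) :
    ‖lam‖ < 1 := by
  rw [aux_spec] at hmem
  obtain ⟨v, hv, hv2⟩ := hmem
  have hkc := aux_keyC R c hkey v
  rw [hv2] at hkc
  set S := ∑ i, ‖v i‖ ^ 2 with hS
  have hS0 : 0 < S := by
    obtain ⟨i, hi⟩ := Function.ne_iff.mp hv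
    have : 0 < ‖v i‖ ^ 2 := pow_pos (norm_pos_iff.mpr hi) 2
    exact lt_of_lt_of_le this (Finset.single_le_sum (f := fun i => ‖v i‖ ^ 2)
      (fun i _ => by positivity) (Finset.mem_univ i))
  have e1 : ∑ i, ‖(lam • v) i‖ ^ 2 = ‖lam‖ ^ 2 * S := by
    rw [hS, Finset.mul_sum]
    apply Finset.sum_congr rfl
    intro i _
    simp [Pi.smul_apply, map_mul, norm_mul, mul_pow]
  have e2 : ∑ i, ‖v i - (lam • v) i‖ ^ 2 = ‖1 - lam‖ ^ 2 * S := by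
    rw [hS, Finset.mul_sum]
    apply Finset.sum_congr rfl
    intro i _
    rw [show v i - (lam • v) i = (1 - lam) * v i by simp [Pi.smul_apply]; ring]
    simp [map_mul, norm_mul, mul_pow]
  rw [e1, e2] at hkc
  have h1lam : 0 < ‖1 - lam‖ := by
    rw [norm_pos_iff]
    intro h
    exact hne (by linear_combination -h)
  have h2 : ‖lam‖ ^ 2 < 1 := by
    nlinarith [mul_pos (mul_pos hc (pow_pos h1lam 2)) hS0]
  nlinarith [norm_nonneg lam]

local notation "E" => EuclideanSpace ℝ (Fin N)

noncomputable def Pcdef (Lr : E →L[ℝ] E) : E →L[ℝ] E :=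
  (LinearMap.ker ((1 - Lr : E →L[ℝ] E) : E →ₗ[ℝ] E)).subtypeL.comp
    (Submodule.orthogonalProjectionOnto (LinearMap.ker ((1 - Lr : E →L[ℝ] E) : E →ₗ[ℝ] E)))

theorem aux_adj (Lr : E →L[ℝ] E) (hL : ∀ u, ‖Lr u‖ ≤ ‖u‖) (z : E) (hz : Lr z = z) :
    (ContinuousLinearMap.adjoint Lr) z = z := by
  have h1 : (inner ℝ ((ContinuousLinearMap.adjoint Lr) z) z : ℝ) = ‖z‖ ^ 2 := by
    rw [ContinuousLinearMap.adjoint_inner_left, hz, real_inner_self_eq_norm_sq]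
  have h2 : ‖(ContinuousLinearMap.adjoint Lr) z‖ ≤ ‖z‖ := by
    have hnorm : ‖ContinuousLinearMap.adjoint Lr‖ = ‖Lr‖ := by
      exact LinearIsometryEquiv.norm_map (ContinuousLinearMap.adjoint (𝕜 := ℝ)) Lr
    have hL1 : ‖Lr‖ ≤ 1 := Lr.opNorm_le_bound zero_le_one (by simpa using hL)
    calc ‖(ContinuousLinearMap.adjoint Lr) z‖ ≤ ‖ContinuousLinearMap.adjoint Lr‖ * ‖z‖ :=
          (ContinuousLinearMap.adjoint Lr).le_opNorm z
      _ ≤ 1 * ‖z‖ := by rw [hnorm]; exact mul_le_mul_of_nonneg_right hL1 (norm_nonneg z)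
      _ = ‖z‖ := one_mul _
  have h3 : ‖(ContinuousLinearMap.adjoint Lr) z - z‖ ^ 2 ≤ 0 := by
    rw [norm_sub_sq_real, h1]
    nlinarith [norm_nonneg ((ContinuousLinearMap.adjoint Lr) z), norm_nonneg z]
  have h4 : (ContinuousLinearMap.adjoint Lr) z - z = 0 := by
    rw [← norm_eq_zero]
    nlinarith [norm_nonneg ((ContinuousLinearMap.adjoint Lr) z - z)]
  exact sub_eq_zero.mp h4

theorem aux_mem (Lr : E →L[ℝ] E) (z : E) :
    z ∈ LinearMap.ker ((1 - Lr : E →L[ℝ] E) : E →ₗ[ℝ] E) ↔ Lr z = z := by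
  rw [LinearMap.mem_ker]
  constructor
  · intro h
    have : z - Lr z = 0 := by simpa using h
    exact (sub_eq_zero.mp this).symm
  · intro h
    simp [ContinuousLinearMap.sub_apply, h]

theorem aux_PK (Lr : E →L[ℝ] E) (z : E) (hz : Lr z = z) : Pcdef Lr z = z := by
  have hmem : z ∈ LinearMap.ker ((1 - Lr : E →L[ℝ] E) : E →ₗ[ℝ] E) := (aux_mem Lr z).mpr hz
  simp only [Pcdef, ContinuousLinearMap.comp_apply, Submodule.subtypeL_apply]
  exact Submodule.starProjection_eq_self_iff.mpr hmem

theorem aux_PL (Lr : E →L[ℝ] E) (hL : ∀ u, ‖Lr u‖ ≤ ‖u‖) :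
    (Pcdef Lr).comp Lr = Pcdef Lr := by
  refine ContinuousLinearMap.ext fun x => ?_
  have hperp : Lr x - x ∈ (LinearMap.ker ((1 - Lr : E →L[ℝ] E) : E →ₗ[ℝ] E))ᗮ := by
    rw [Submodule.mem_orthogonal]
    intro z hz
    have hz' : Lr z = z := (aux_mem Lr z).mp hz
    have hadjr := ContinuousLinearMap.adjoint_inner_right Lr x z
    have : (inner ℝ z (Lr x) : ℝ) = inner ℝ z x :=
      calc (inner ℝ z (Lr x) : ℝ) = inner ℝ (Lr x) z := real_inner_comm _ _
        _ = inner ℝ x ((ContinuousLinearMap.adjoint Lr) z) := hadjr.symm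
        _ = inner ℝ x z := by rw [aux_adj Lr hL z hz']
        _ = inner ℝ z x := real_inner_comm _ _
    rw [inner_sub_right, this, sub_self]
  have : Pcdef Lr (Lr x - x) = 0 := by
    simp only [Pcdef, ContinuousLinearMap.comp_apply]
    rw [Submodule.orthogonalProjectionOnto_apply_of_mem_orthogonal hperp]
    exact map_zero _
  have h2 : Pcdef Lr (Lr x) - Pcdef Lr x = 0 := by
    rw [← map_sub]; exact this
  simpa [ContinuousLinearMap.comp_apply] using sub_eq_zero.mp h2

theorem aux_LP (Lr : E →L[ℝ] E) : Lr.comp (Pcdef Lr) = Pcdef Lr := by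
  refine ContinuousLinearMap.ext fun x => ?_
  have hmem : Pcdef Lr x ∈ LinearMap.ker ((1 - Lr : E →L[ℝ] E) : E →ₗ[ℝ] E) := by
    simp only [Pcdef, ContinuousLinearMap.comp_apply]
    exact ((Submodule.orthogonalProjectionOnto _) x).2
  exact (aux_mem Lr _).mp hmem

theorem aux_PP (Lr : E →L[ℝ] E) : (Pcdef Lr).comp (Pcdef Lr) = Pcdef Lr := by
  refine ContinuousLinearMap.ext fun x => ?_
  have hmem : Pcdef Lr x ∈ LinearMap.ker ((1 - Lr : E →L[ℝ] E) : E →ₗ[ℝ] E) := by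
    simp only [Pcdef, ContinuousLinearMap.comp_apply]
    exact ((Submodule.orthogonalProjectionOnto _) x).2
  exact aux_PK Lr _ ((aux_mem Lr _).mp hmem)

/-- eventual real bound from Gelfand's formula -/
theorem aux_real_bound (hN : 0 < N)
    (MC : EuclideanSpace ℂ (Fin N) →L[ℂ] EuclideanSpace ℂ (Fin N))
    (ν r : ℝ) (h0 : 0 ≤ ν) (hνr : ν < r)
    (hsr : spectralRadius ℂ MC ≤ ENNReal.ofReal ν) :
    ∀ᶠ n : ℕ in atTop, ‖MC ^ n‖ ^ ((n : ℝ)⁻¹) ≤ r := by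
  haveI : Nonempty (Fin N) := ⟨⟨0, hN⟩⟩
  have hlt : spectralRadius ℂ MC < ENNReal.ofReal r :=
    lt_of_le_of_lt hsr (ENNReal.ofReal_lt_ofReal_iff (lt_of_le_of_lt h0 hνr) |>.mpr hνr)
  filter_upwards [(spectrum.pow_nnnorm_pow_one_div_tendsto_nhds_spectralRadius
    MC).eventually_lt_const hlt] with n hn
  have h1 : ((‖MC ^ n‖₊ : ENNReal) ^ (1 / (n : ℝ))).toReal ≤ (ENNReal.ofReal r).toReal := by
    refine ENNReal.toReal_mono ENNReal.ofReal_ne_top hn.le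
  rw [ENNReal.toReal_ofReal (le_of_lt (lt_of_le_of_lt h0 hνr))] at h1
  rw [← ENNReal.toReal_rpow] at h1
  simpa [one_div] using h1

end Aux

set_option maxHeartbeats 2000000 in
set_option synthInstance.maxHeartbeats 1000000 in
theorem stmt_8 {N : ℕ} (hN : 1 ≤ N) {α : ℝ} (hα : α ∈ Set.Ioo (0 : ℝ) 1)
    (R : Matrix (Fin N) (Fin N) ℝ) (d : EuclideanSpace ℝ (Fin N))
    (T : EuclideanSpace ℝ (Fin N) → EuclideanSpace ℝ (Fin N))
    (hTdef : T = fun x =>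
      (EuclideanSpace.equiv (Fin N) ℝ).symm (R.mulVec (EuclideanSpace.equiv (Fin N) ℝ x)) + d)
    (hT : IsAveragedOp α T) (hfix : ∃ z, T z = z)
    (ν : ℝ)
    (hν : ν = sSup (insert (0 : ℝ)
      ((fun z : ℂ => ‖z‖) '' {lam : ℂ | lam ∈ spectrum ℂ (R.map (algebraMap ℝ ℂ)) ∧ lam ≠ 1}))) :
    ν < 1 ∧
    ∀ (x₀ : EuclideanSpace ℝ (Fin N)) (x : ℕ → EuclideanSpace ℝ (Fin N)),
      x 0 = x₀ → (∀ k, x (k + 1) = T (x k)) →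
      ∃ xbar, T xbar = xbar ∧ Tendsto x atTop (𝓝 xbar) ∧
        Filter.limsup (fun k : ℕ => ‖x k - xbar‖ ^ ((k : ℝ)⁻¹)) atTop ≤ ν := by
  obtain ⟨hα0, hα1⟩ := hα
  set c : ℝ := (1 - α) / α with hc_def
  have hc : 0 < c := div_pos (by linarith) hα0
  set A := R.map (algebraMap ℝ ℂ) with hA
  set Lr := Matrix.toEuclideanCLM (𝕜 := ℝ) R with hLr
  -- affine difference identity
  have hTsub : ∀ p q, T p - T q = Lr (p - q) := by
    intro p q
    have happ : ∀ y, Lr y =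
        (EuclideanSpace.equiv (Fin N) ℝ).symm (R.mulVec (EuclideanSpace.equiv (Fin N) ℝ y)) :=
      fun _ => rfl
    rw [hTdef]
    simp only
    rw [add_sub_add_right_eq_sub, happ, map_sub, Matrix.mulVec_sub, map_sub]
  -- key inequality on E
  have hkeyE : ∀ u : EuclideanSpace ℝ (Fin N),
      ‖Lr u‖ ^ 2 + c * ‖u - Lr u‖ ^ 2 ≤ ‖u‖ ^ 2 := by
    intro u
    have h := hT u 0
    have e1 : T u - T 0 = Lr u := by rw [hTsub, sub_zero]
    have e2 : (u - T u) - (0 - T 0) = u - Lr u := by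
      have : (u - T u) - (0 - T 0) = (u - 0) - (T u - T 0) := by abel
      rw [this, hTsub]
      simp
    rw [e1, e2, sub_zero] at h
    exact h
  -- key inequality in coordinates
  have hkey : ∀ u : Fin N → ℝ, (∑ i, (R.mulVec u) i ^ 2) + c * ∑ i, (u i - (R.mulVec u) i) ^ 2
      ≤ ∑ i, u i ^ 2 := by
    intro u
    have h := hkeyE ((WithLp.equiv 2 (Fin N → ℝ)).symm u)
    have e0 : Lr ((WithLp.equiv 2 (Fin N → ℝ)).symm u)
        = (WithLp.equiv 2 (Fin N → ℝ)).symm (R.mulVec u) := by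
      rw [hLr, WithLp.equiv_symm_apply, Matrix.toEuclideanCLM_toLp]
    rw [e0] at h
    rw [aux_nsq, aux_nsq, aux_nsq] at h
    simpa using h
  -- nonexpansiveness
  have hLnon : ∀ u, ‖Lr u‖ ≤ ‖u‖ := by
    intro u
    have h := hkeyE u
    nlinarith [norm_nonneg (Lr u), norm_nonneg u, sq_nonneg (‖u - Lr u‖), mul_nonneg hc.le (sq_nonneg ‖u - Lr u‖)]
  -- the ν facts
  set s : Set ℝ := insert (0 : ℝ)
      ((fun z : ℂ => ‖z‖) '' {lam : ℂ | lam ∈ spectrum ℂ A ∧ lam ≠ 1}) with hs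
  have hsfin : s.Finite := by
    refine Set.Finite.insert _ (Set.Finite.image _ ?_)
    exact (A.finite_spectrum).subset (fun lam h => h.1)
  have hbddA : BddAbove s := hsfin.bddAbove
  have hν0 : 0 ≤ ν := by rw [hν]; exact le_csSup hbddA (Set.mem_insert _ _)
  have hν1 : ν < 1 := by
    rw [hν]
    have hmem := ((Set.insert_nonempty _ _).csSup_mem hsfin)
    rcases hmem with h0 | hmem2
    · rw [h0]; norm_num
    · obtain ⟨lam, ⟨hl1, hl2⟩, hl3⟩ := hmem2
      rw [← hl3]
      exact aux_eiglt R c hc hkey lam hl1 hl2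
  have hle : ∀ lam ∈ spectrum ℂ A, lam ≠ 1 → ‖lam‖ ≤ ν := by
    intro lam h h1
    rw [hν]
    exact le_csSup hbddA (Set.mem_insert_of_mem _ ⟨lam, ⟨h, h1⟩, rfl⟩)
  refine ⟨hν1, ?_⟩
  -- operators and matrices
  set Pc := Pcdef Lr with hPc_def
  set Pm := (Matrix.toEuclideanCLM (𝕜 := ℝ)).symm Pc with hPm_def
  have hPm : Matrix.toEuclideanCLM (𝕜 := ℝ) Pm = Pc := by
    rw [hPm_def]; exact StarAlgEquiv.apply_symm_apply _ _
  have hRsymm : (Matrix.toEuclideanCLM (𝕜 := ℝ)).symm Lr = R := by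
    rw [hLr]; exact StarAlgEquiv.symm_apply_apply _ _
  have hPL' : Pc * Lr = Pc := aux_PL Lr hLnon
  have hLP' : Lr * Pc = Pc := aux_LP Lr
  have hPP' : Pc * Pc = Pc := aux_PP Lr
  have hPmR : Pm * R = Pm := by
    rw [hPm_def, ← hRsymm, ← map_mul, hPL']
  have hRPm : R * Pm = Pm := by
    rw [hPm_def, ← hRsymm, ← map_mul, hLP']
  have hPmPm : Pm * Pm = Pm := by
    rw [hPm_def, ← map_mul, hPP']
  set Mm := R - Pm with hMm
  have hpowR : ∀ k : ℕ, R ^ (k + 1) * Pm = Pm := by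
    intro k
    induction k with
    | zero => rw [pow_one]; exact hRPm
    | succ n ih =>
      rw [pow_succ']
      rw [mul_assoc, ih]
      exact hRPm
  have hMk : ∀ k : ℕ, Mm ^ (k + 1) = R ^ (k + 1) - Pm := by
    intro k
    induction k with
    | zero => rw [pow_one, pow_one]
    | succ n ih =>
      rw [pow_succ, ih, hMm, sub_mul, mul_sub, mul_sub, hpowR, hPmR, hPmPm, ← pow_succ]
      abel
  have hPmMm : Pm * Mm = 0 := by rw [hMm, mul_sub, hPmR, hPmPm, sub_self]
  -- complex matrices
  set PmC := Pm.map (algebraMap ℝ ℂ) with hPmC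
  set Mc := Mm.map (algebraMap ℝ ℂ) with hMc
  have hPMC : PmC * Mc = 0 := by
    rw [hPmC, hMc, ← RingHom.mapMatrix_apply, ← RingHom.mapMatrix_apply, ← map_mul, hPmMm,
      map_zero]
  have hMcsub : Mc = A - PmC := by
    rw [hMc, hMm, hA, hPmC, ← RingHom.mapMatrix_apply, map_sub]
    rfl
  -- spectrum bound for Mc
  have hspecMc : ∀ μ ∈ spectrum ℂ Mc, ‖μ‖ ≤ ν := by
    intro μ hμ
    rw [aux_spec] at hμ
    obtain ⟨v, hv, hv2⟩ := hμ
    by_cases hμ0 : μ = 0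
    · rw [hμ0]; simpa using hν0
    · have hPv : PmC.mulVec v = 0 := by
        have h1 : PmC.mulVec (Mc.mulVec v) = 0 := by
          rw [Matrix.mulVec_mulVec, hPMC, Matrix.zero_mulVec]
        rw [hv2, Matrix.mulVec_smul] at h1
        exact (smul_eq_zero.mp h1).resolve_left hμ0
      have hAv : A.mulVec v = μ • v := by
        have := hMcsub
        rw [this, Matrix.sub_mulVec, hPv, sub_zero] at hv2
        exact hv2
      have hμ1 : μ ≠ 1 := by
        intro h1
        rw [h1, one_smul] at hAv
        -- real and imaginary parts are fixed by R hence by Pm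
        have hfixmv : ∀ a : Fin N → ℝ, R.mulVec a = a → Pm.mulVec a = a := by
          intro a ha
          have h2 : Lr ((WithLp.equiv 2 (Fin N → ℝ)).symm a)
              = (WithLp.equiv 2 (Fin N → ℝ)).symm a := by
            rw [hLr, WithLp.equiv_symm_apply, Matrix.toEuclideanCLM_toLp, ha]
          have h3 : Pc ((WithLp.equiv 2 (Fin N → ℝ)).symm a)
              = (WithLp.equiv 2 (Fin N → ℝ)).symm a := by
            rw [hPc_def]; exact aux_PK Lr _ h2
          have h4 : Pc ((WithLp.equiv 2 (Fin N → ℝ)).symm a)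
              = (WithLp.equiv 2 (Fin N → ℝ)).symm (Pm.mulVec a) := by
            rw [← hPm, WithLp.equiv_symm_apply, Matrix.toEuclideanCLM_toLp]
          rw [h4] at h3
          exact (WithLp.equiv 2 (Fin N → ℝ)).symm.injective h3
        have hre : R.mulVec (fun j => (v j).re) = fun j => (v j).re := by
          funext i
          have := congrFun hAv i
          have h5 := congrArg Complex.re this
          rw [aux_re' (B := R)] at h5
          exact h5
        have him : R.mulVec (fun j => (v j).im) = fun j => (v j).im := by
          funext i
          have := congrFun hAv i
          have h5 := congrArg Complex.im this
          rw [aux_im' (B := R)] at h5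
          exact h5
        have hPvv : PmC.mulVec v = v := by
          funext i
          apply Complex.ext
          · rw [hPmC, aux_re', hfixmv _ hre]
          · rw [hPmC, aux_im', hfixmv _ him]
        rw [hPv] at hPvv
        exact hv (hPvv.symm)
      exact hle μ ((aux_spec A μ).mpr ⟨v, hv, hAv⟩) hμ1
  -- spectral radius bound
  set MC := Matrix.toEuclideanCLM (𝕜 := ℂ) Mc with hMC
  have hspecMC : spectrum ℂ MC = spectrum ℂ Mc := by
    exact AlgEquiv.spectrum_eq (AlgEquivClass.toAlgEquiv (F := Matrix (Fin N) (Fin N) ℂ ≃⋆ₐ[ℂ]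
      (EuclideanSpace ℂ (Fin N) →L[ℂ] EuclideanSpace ℂ (Fin N))) Matrix.toEuclideanCLM) Mc
  have hsrad : spectralRadius ℂ MC ≤ ENNReal.ofReal ν := by
    rw [spectralRadius]
    refine iSup₂_le fun k hk => ?_
    rw [hspecMC] at hk
    have := hspecMc k hk
    rw [← ENNReal.ofReal_coe_nnreal, coe_nnnorm]
    exact ENNReal.ofReal_le_ofReal this
  -- powers
  have hMCpow : ∀ k : ℕ, MC ^ k = Matrix.toEuclideanCLM (𝕜 := ℂ) ((Mm ^ k).map (algebraMap ℝ ℂ)) := by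
    intro k
    rw [hMC, ← map_pow, hMc, ← RingHom.mapMatrix_apply, ← RingHom.mapMatrix_apply, ← map_pow]
  have hcmp' : ∀ (k : ℕ) (u : EuclideanSpace ℝ (Fin N)),
      ‖Matrix.toEuclideanCLM (𝕜 := ℝ) (Mm ^ k) u‖ ≤ ‖MC ^ k‖ * ‖u‖ := by
    intro k u
    rw [hMCpow]
    exact aux_cmp (Mm ^ k) u
  -- main part
  intro x₀ x hx0 hxk
  obtain ⟨z, hz⟩ := hfix
  set w := x₀ - z with hw
  set xbar := z + Pc w with hxbar
  have hLrP : ∀ u, Lr (Pc u) = Pc u := fun u => ContinuousLinearMap.ext_iff.mp (aux_LP Lr) u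
  have hTxbar : T xbar = xbar := by
    have h1 : T xbar - T z = Lr (xbar - z) := hTsub xbar z
    rw [hz] at h1
    have h2 : xbar - z = Pc w := by rw [hxbar]; abel
    rw [h2, hLrP] at h1
    have := sub_eq_iff_eq_add.mp h1
    rw [this, hxbar]; abel
  have hxz : ∀ k, x k - z = (Lr ^ k) w := by
    intro k
    induction k with
    | zero => rw [hx0, pow_zero, ContinuousLinearMap.one_apply, hw]
    | succ n ih =>
      rw [hxk n, ← hz, hTsub, ih, pow_succ', ContinuousLinearMap.mul_apply]
  have hdiff : ∀ k : ℕ, x (k + 1) - xbar = Matrix.toEuclideanCLM (𝕜 := ℝ) (Mm ^ (k + 1)) w := by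
    intro k
    have h2 : (Lr ^ (k + 1) : _) = Matrix.toEuclideanCLM (𝕜 := ℝ) (R ^ (k + 1)) := by
      rw [map_pow, hLr]
    have h4 : Matrix.toEuclideanCLM (𝕜 := ℝ) (R ^ (k + 1) - Pm)
        = Matrix.toEuclideanCLM (𝕜 := ℝ) (R ^ (k + 1)) - Matrix.toEuclideanCLM (𝕜 := ℝ) Pm :=
      map_sub _ _ _
    have h3 : Matrix.toEuclideanCLM (𝕜 := ℝ) (Mm ^ (k + 1)) w = (Lr ^ (k + 1)) w - Pc w := by
      rw [hMk k, h4, ContinuousLinearMap.sub_apply, ← h2, hPm]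
    rw [h3, hxbar, ← hxz (k + 1)]
    abel
  have hbndk : ∀ k : ℕ, ‖x (k + 1) - xbar‖ ≤ ‖MC ^ (k + 1)‖ * ‖w‖ := by
    intro k
    rw [hdiff k]
    exact hcmp' (k + 1) w
  -- Tendsto
  have htendsto : Tendsto x atTop (𝓝 xbar) := by
    set r : ℝ := (1 + ν) / 2 with hr
    have hr0 : 0 ≤ r := by rw [hr]; linarith
    have hr1 : r < 1 := by rw [hr]; linarith
    have hνr : ν < r := by rw [hr]; linarith
    have hev := aux_real_bound (lt_of_lt_of_le Nat.zero_lt_one hN) MC ν r hν0 hνr hsrad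
    have hev2 : ∀ᶠ n : ℕ in atTop, ‖MC ^ n‖ ≤ r ^ n := by
      filter_upwards [hev, eventually_ge_atTop 1] with n hn hn1
      calc ‖MC ^ n‖ = (‖MC ^ n‖ ^ ((n : ℝ)⁻¹)) ^ n :=
            (Real.rpow_inv_natCast_pow (norm_nonneg _) (by omega)).symm
        _ ≤ r ^ n := pow_le_pow_left₀ (Real.rpow_nonneg (norm_nonneg _) _) hn n
    have hnormle : ∀ᶠ n : ℕ in atTop, ‖x n - xbar‖ ≤ ‖w‖ * r ^ n := by
      filter_upwards [hev2, eventually_ge_atTop 1] with n hn hn1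
      have h1 := hbndk (n - 1)
      rw [Nat.sub_add_cancel hn1] at h1
      calc ‖x n - xbar‖ ≤ ‖MC ^ n‖ * ‖w‖ := h1
        _ ≤ r ^ n * ‖w‖ := mul_le_mul_of_nonneg_right hn (norm_nonneg w)
        _ = ‖w‖ * r ^ n := mul_comm _ _
    have hg0 : Tendsto (fun n : ℕ => ‖w‖ * r ^ n) atTop (𝓝 0) := by
      have := (tendsto_pow_atTop_nhds_zero_of_lt_one hr0 hr1).const_mul ‖w‖
      simpa using this
    have hsub : Tendsto (fun n => x n - xbar) atTop (𝓝 0) :=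
      squeeze_zero_norm' hnormle hg0
    have := hsub.add_const xbar
    simpa using this
  refine ⟨xbar, hTxbar, htendsto, ?_⟩
  -- limsup
  have hfnonneg : ∀ k : ℕ, 0 ≤ ‖x k - xbar‖ ^ ((k : ℝ)⁻¹) :=
    fun k => Real.rpow_nonneg (norm_nonneg _) _
  have hcob : IsCoboundedUnder (· ≤ ·) atTop (fun k : ℕ => ‖x k - xbar‖ ^ ((k : ℝ)⁻¹)) :=
    isCoboundedUnder_le_of_le atTop hfnonneg
  by_cases hw0 : w = 0
  · -- degenerate case : x k = xbar for all k ≥ 1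
    have heq : ∀ k : ℕ, x (k + 1) = xbar := by
      intro k
      have := hdiff k
      rw [hw0, map_zero] at this
      exact sub_eq_zero.mp this
    have hev : ∀ᶠ k : ℕ in atTop, ‖x k - xbar‖ ^ ((k : ℝ)⁻¹) ≤ ν := by
      filter_upwards [eventually_ge_atTop 1] with k hk
      have h1 := heq (k - 1)
      rw [Nat.sub_add_cancel hk] at h1
      rw [h1, sub_self, norm_zero, Real.zero_rpow (by positivity)]
      exact hν0
    exact limsup_le_of_le hcob hev
  · refine le_of_forall_pos_le_add fun ε hε => ?_
    set r' : ℝ := ν + ε / 2 with hr'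
    have hνr' : ν < r' := by rw [hr']; linarith
    have hev := aux_real_bound (lt_of_lt_of_le Nat.zero_lt_one hN) MC ν r' hν0 hνr' hsrad
    have hw0' : 0 < ‖w‖ := norm_pos_iff.mpr hw0
    set g : ℕ → ℝ := fun k => r' * ‖w‖ ^ ((k : ℝ)⁻¹) with hg
    have hfg : ∀ᶠ k : ℕ in atTop, ‖x k - xbar‖ ^ ((k : ℝ)⁻¹) ≤ g k := by
      filter_upwards [hev, eventually_ge_atTop 1] with k hk hk1
      have h1 := hbndk (k - 1)
      rw [Nat.sub_add_cancel hk1] at h1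
      calc ‖x k - xbar‖ ^ ((k : ℝ)⁻¹) ≤ (‖MC ^ k‖ * ‖w‖) ^ ((k : ℝ)⁻¹) :=
            Real.rpow_le_rpow (norm_nonneg _) h1 (by positivity)
        _ = ‖MC ^ k‖ ^ ((k : ℝ)⁻¹) * ‖w‖ ^ ((k : ℝ)⁻¹) :=
            Real.mul_rpow (norm_nonneg _) (norm_nonneg _)
        _ ≤ r' * ‖w‖ ^ ((k : ℝ)⁻¹) :=
            mul_le_mul_of_nonneg_right hk (Real.rpow_nonneg (norm_nonneg _) _)
    have hgt : Tendsto g atTop (𝓝 r') := by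
      have h1 : Tendsto (fun k : ℕ => ((k : ℝ))⁻¹ * Real.log ‖w‖) atTop (𝓝 0) := by
        have := tendsto_inv_atTop_nhds_zero_nat.mul_const (Real.log ‖w‖)
        simpa using this
      have h2 : Tendsto (fun k : ℕ => ‖w‖ ^ ((k : ℝ)⁻¹)) atTop (𝓝 1) := by
        have h3 : ∀ k : ℕ, ‖w‖ ^ ((k : ℝ)⁻¹) = Real.exp (((k : ℝ))⁻¹ * Real.log ‖w‖) := by
          intro k
          rw [Real.rpow_def_of_pos hw0', mul_comm]
        rw [funext h3]
        have := (Real.continuous_exp.tendsto 0).comp h1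
        simpa [Function.comp_def] using this
      have := h2.const_mul r'
      simpa [hg, mul_one] using this
    have hbddg : IsBoundedUnder (· ≤ ·) atTop g := hgt.isBoundedUnder_le
    calc limsup (fun k : ℕ => ‖x k - xbar‖ ^ ((k : ℝ)⁻¹)) atTop
        ≤ limsup g atTop := limsup_le_limsup hfg hcob hbddg
      _ = r' := hgt.limsup_eq
      _ ≤ ν + ε := by rw [hr']; linarith
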